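/- Let q̃ ≥ 2 and 0 ≤ c̃ ≤ g−1 with 2c̃ + q̃ = n+1, and let k_1,…,k_c̃ ∈ {1,…,g} be pairwise distinct. Then the Macdonald relation (y − x_{k_1}x'_{k_1})⋯(y − x_{k_c̃}x'_{k_c̃})·y^{q̃} lies in the ideal of E generated by the Macdonald relations of weight n+1 with a = b = 0, c = c̃ + 1 and exponent of y equal to q̃ − 2. -/

import Mathlib

noncomputable section

open Polynomial

/-- The free graded-commutative ring `E = Λ_ℤ⟨x₁,…,x_g,x'₁,…,x'_g⟩ ⊗ ℤ[y]`,
realized as the exterior algebra over `ℤ[y]` on a free module of rank `2g`. -/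
abbrev E (g : ℕ) : Type :=
  ExteriorAlgebra (Polynomial ℤ) ((Fin g ⊕ Fin g) → Polynomial ℤ)

/-- The degree-one generator `x_i`. -/
def x (g : ℕ) (i : Fin g) : E g :=
  ExteriorAlgebra.ι (Polynomial ℤ) (Pi.single (Sum.inl i) 1)

/-- The degree-one generator `x'_i`. -/
def x' (g : ℕ) (i : Fin g) : E g :=
  ExteriorAlgebra.ι (Polynomial ℤ) (Pi.single (Sum.inr i) 1)

/-- The degree-two polynomial generator `y`. -/
def y (g : ℕ) : E g :=
  algebraMap (Polynomial ℤ) (E g) Polynomial.X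

/-- The Macdonald relation `x_{i₁}⋯x_{i_a}·x'_{j₁}⋯x'_{j_b}·(y−x_{k₁}x'_{k₁})⋯(y−x_{k_c}x'_{k_c})·y^q`
associated to lists of indices `I, J, K` and `q : ℕ`. -/
def macRel (g : ℕ) (I J K : List (Fin g)) (q : ℕ) : E g :=
  (I.map (x g)).prod * (J.map (x' g)).prod *
    (K.map (fun k => y g - x g k * x' g k)).prod * (y g) ^ q

/-- The two-sided ideal `I_Mac` generated by all Macdonald relations of weight `n+1`. -/
def IMac (g n : ℕ) : TwoSidedIdeal (E g) :=
  TwoSidedIdeal.span {z : E g | ∃ (I J K : List (Fin g)) (q : ℕ),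
    (I ++ J ++ K).Nodup ∧ I.length + J.length + 2 * K.length + q = n + 1 ∧
    z = macRel g I J K q}

/-- The monomial `x_A x'_B y^q`. -/
def emonomial (g : ℕ) (A B : Finset (Fin g)) (q : ℕ) : E g :=
  ((A.sort (· ≤ ·)).map (x g)).prod * ((B.sort (· ≤ ·)).map (x' g)).prod * (y g) ^ q

/-- The degree-`s` homogeneous component `E^s`, the ℤ-span of the monomials of degree `s`. -/
def Ecomp (g s : ℕ) : Submodule ℤ (E g) :=
  Submodule.span ℤ {z : E g | ∃ (A B : Finset (Fin g)) (q : ℕ),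
    A.card + B.card + 2 * q = s ∧ z = emonomial g A B q}

-- auxiliary lemmas

lemma four_swap {R : Type*} [Ring R] (a b c d : R)
    (hbc : b * c = -(c * b)) (hac : a * c = -(c * a))
    (hbd : b * d = -(d * b)) (had : a * d = -(d * a)) :
    (a * b) * (c * d) = (c * d) * (a * b) := by
  calc (a * b) * (c * d) = a * (b * c) * d := by noncomm_ring
    _ = a * (-(c * b)) * d := by rw [hbc]
    _ = -((a * c) * (b * d)) := by noncomm_ring
    _ = -((-(c * a)) * (b * d)) := by rw [hac]
    _ = c * (a * (b * d)) := by noncomm_ring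
    _ = c * (a * (-(d * b))) := by rw [hbd]
    _ = -(c * ((a * d) * b)) := by noncomm_ring
    _ = -(c * ((-(d * a)) * b)) := by rw [had]
    _ = (c * d) * (a * b) := by noncomm_ring

lemma pair_sq_zero {R : Type*} [Ring R] (a b : R)
    (ha : a * a = 0) (hb : b * b = 0) (hba : b * a = -(a * b)) :
    (a * b) * (a * b) = 0 := by
  calc (a * b) * (a * b) = a * (b * a) * b := by noncomm_ring
    _ = a * (-(a * b)) * b := by rw [hba]
    _ = -((a * a) * (b * b)) := by noncomm_ring
    _ = 0 := by rw [ha, hb, mul_zero, neg_zero]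

section Aux

variable {g : ℕ}

lemma ι_anticomm (u v : (Fin g ⊕ Fin g) → Polynomial ℤ) :
    ExteriorAlgebra.ι (Polynomial ℤ) u * ExteriorAlgebra.ι (Polynomial ℤ) v =
      -(ExteriorAlgebra.ι (Polynomial ℤ) v * ExteriorAlgebra.ι (Polynomial ℤ) u) :=
  eq_neg_of_add_eq_zero_left (ExteriorAlgebra.ι_add_mul_swap u v)

lemma commute_pairs (a b c d : (Fin g ⊕ Fin g) → Polynomial ℤ) :
    Commute (ExteriorAlgebra.ι (Polynomial ℤ) a * ExteriorAlgebra.ι (Polynomial ℤ) b)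
      (ExteriorAlgebra.ι (Polynomial ℤ) c * ExteriorAlgebra.ι (Polynomial ℤ) d) :=
  four_swap _ _ _ _ (ι_anticomm b c) (ι_anticomm a c) (ι_anticomm b d) (ι_anticomm a d)

lemma xx'_sq_zero (k : Fin g) : (x g k * x' g k) * (x g k * x' g k) = 0 :=
  pair_sq_zero _ _ (ExteriorAlgebra.ι_sq_zero _) (ExteriorAlgebra.ι_sq_zero _)
    (ι_anticomm _ _)

end Aux

set_option maxHeartbeats 2000000 in
/-- A Macdonald relation `(y − x_{k₁}x'_{k₁})⋯(y − x_{k_c̃}x'_{k_c̃})·y^{q̃}` of weight `n+1`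
with `q̃ ≥ 2`, `a = b = 0` and `0 ≤ c̃ ≤ g − 1` lies in the ideal generated by the Macdonald
relations of weight `n+1` with `a = b = 0`, `c = c̃ + 1` and exponent of `y` equal to `q̃ − 2`. -/
theorem macRel_c_only_mem_span (g n : ℕ) (hg : 1 ≤ g) (hn : 2 ≤ n)
    (K : List (Fin g)) (q : ℕ) (hq : 2 ≤ q) (hnd : K.Nodup) (hc : K.length ≤ g - 1)
    (hw : 2 * K.length + q = n + 1) :
    macRel g [] [] K q ∈ TwoSidedIdeal.span {z : E g |
      ∃ K' : List (Fin g), K'.Nodup ∧ K'.length = K.length + 1 ∧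
        z = macRel g [] [] K' (q - 2)} := by
  -- find an index not in K
  obtain ⟨k, hk⟩ : ∃ k : Fin g, k ∉ K := by
    by_contra h
    push_neg at h
    have hsub : (Finset.univ : Finset (Fin g)) ⊆ K.toFinset := fun a _ => by
      simpa using h a
    have hcard := Finset.card_le_card hsub
    rw [List.toFinset_card_of_nodup hnd, Finset.card_univ, Fintype.card_fin] at hcard
    omega
  obtain ⟨r, rfl⟩ : ∃ r, q = r + 2 := ⟨q - 2, by omega⟩
  set Y := y g with hY
  set z := x g k * x' g k with hzdef
  set P := (K.map (fun j => Y - x g j * x' g j)).prod with hP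
  have hzY : Commute z Y := (Algebra.commutes Polynomial.X z).symm
  have hzP : Commute z P := by
    apply Commute.list_prod_right
    intro w hw
    obtain ⟨j, -, rfl⟩ := List.mem_map.mp hw
    exact hzY.sub_right (commute_pairs _ _ _ _)
  have hz2 : z * z = 0 := xx'_sq_zero k
  set s := macRel g [] [] (K ++ [k]) (r + 2 - 2) with hs
  have hsmem : s ∈ ({w : E g | ∃ K' : List (Fin g), K'.Nodup ∧ K'.length = K.length + 1 ∧
      w = macRel g [] [] K' (r + 2 - 2)} : Set (E g)) := by
    refine ⟨K ++ [k], ?_, by simp, rfl⟩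
    simpa [List.nodup_append] using ⟨hnd, fun a ha hak => hk (hak ▸ ha)⟩
  have hseq : s = P * ((Y - z) * Y ^ r) := by
    simp only [hs, macRel, List.map_nil, List.prod_nil, one_mul, List.map_append,
      List.prod_append, List.map_cons, List.prod_cons, mul_one, Nat.add_sub_cancel, ← hY,
      ← hzdef, ← hP]
    rw [mul_assoc]
  have key : macRel g [] [] K (r + 2) = s * Y + z * s := by
    simp only [macRel, List.map_nil, List.prod_nil, one_mul, hseq, ← hY, ← hP]
    have h1 : z * (P * ((Y - z) * Y ^ r)) = P * (z * ((Y - z) * Y ^ r)) := by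
      rw [← mul_assoc, hzP.eq, mul_assoc]
    rw [h1, mul_assoc P ((Y - z) * Y ^ r) Y, ← mul_add]
    congr 1
    have expand : (Y - z) * Y + z * (Y - z) = Y * Y := by
      rw [sub_mul, mul_sub, hz2, sub_zero]
      abel
    calc Y ^ (r + 2) = ((Y - z) * Y + z * (Y - z)) * Y ^ r := by
          rw [expand, ← pow_two, ← pow_add]
          ring_nf
      _ = (Y - z) * Y ^ (r + 1) + z * ((Y - z) * Y ^ r) := by
          rw [add_mul, mul_assoc z (Y - z) (Y ^ r), mul_assoc (Y - z) Y (Y ^ r),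
            ← pow_succ']
      _ = (Y - z) * Y ^ r * Y + z * ((Y - z) * Y ^ r) := by
          rw [mul_assoc (Y - z) (Y ^ r) Y, ← pow_succ]
  rw [key]
  exact TwoSidedIdeal.add_mem _
    (TwoSidedIdeal.mul_mem_right _ _ _ (TwoSidedIdeal.subset_span hsmem))
    (TwoSidedIdeal.mul_mem_left _ _ _ (TwoSidedIdeal.subset_span hsmem))
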